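/- arXiv:2501.12359 — 6 statements merged into one kernel-verified Lean document; each statement's English description precedes it below -/
import Mathlib

section
/- Let γ > 0, let ρ and σ be states on ℂ^n, and let 𝓜 be a set of measurement operators (each M ∈ 𝓜 satisfies 0 ≤ M ≤ I) whose symmetrized set 𝓜₂ is nonempty. Then E_γ^𝓜(ρ‖σ) = γ · E_{1/γ}^𝓜(σ‖ρ). -/
noncomputable section
open Matrix ComplexOrder

/-- Square complex matrices of size `n`. -/
abbrev Mat (n : ℕ) := Matrix (Fin n) (Fin n) ℂ

/-- A quantum state: positive semidefinite with unit trace. -/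
def IsState {n : ℕ} (ρ : Mat n) : Prop := ρ.PosSemidef ∧ ρ.trace = 1

/-- The symmetrized measurement set 𝓜₂ := {M ∈ 𝓜 : I − M ∈ 𝓜}. -/
def M2 {n : ℕ} (𝓜 : Set (Mat n)) : Set (Mat n) := {M | M ∈ 𝓜 ∧ (1 - M) ∈ 𝓜}

/-- Measured hockey-stick divergence for γ ≥ 0:
`E_γ^𝓜(ρ‖σ) = sup_{M ∈ 𝓜₂} Tr[M(ρ − γσ)] − max{0, 1 − γ}`. -/
def Emeas {n : ℕ} (γ : ℝ) (𝓜 : Set (Mat n)) (ρ σ : Mat n) : ℝ :=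
  sSup ((fun M => ((M * (ρ - (γ : ℂ) • σ)).trace).re) '' M2 𝓜) - max 0 (1 - γ)

open scoped MatrixOrder in
lemma trace_mul_re_nonneg {n : ℕ} {A B : Mat n} (hA : A.PosSemidef) (hB : B.PosSemidef) :
    0 ≤ ((A * B).trace).re := by
  have hA0 : (0 : Mat n) ≤ A := Matrix.nonneg_iff_posSemidef.mpr hA
  have hS0 : (0 : Mat n) ≤ CFC.sqrt A := CFC.sqrt_nonneg A
  have hSpsd : (CFC.sqrt A).PosSemidef := Matrix.nonneg_iff_posSemidef.mp hS0
  have h2 : (A * B).trace = (CFC.sqrt A * B * CFC.sqrt A).trace := by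
    conv_rhs => rw [trace_mul_cycle, CFC.sqrt_mul_sqrt_self A hA0]
  have hpsd : (CFC.sqrt A * B * CFC.sqrt A).PosSemidef := by
    have := hB.mul_mul_conjTranspose_same (CFC.sqrt A)
    rwa [hSpsd.isHermitian.eq] at this
  rw [h2, Matrix.trace]
  simp only [Matrix.diag]
  rw [Complex.re_sum]
  refine Finset.sum_nonneg fun i _ => ?_
  have h3 : (0:ℂ) ≤ (CFC.sqrt A * B * CFC.sqrt A) i i := hpsd.diag_nonneg
  exact (Complex.le_def.mp h3).1

theorem stmt_0 {n : ℕ} (γ : ℝ) (hγ : 0 < γ) (ρ σ : Mat n)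
    (hρ : IsState ρ) (hσ : IsState σ) (𝓜 : Set (Mat n))
    (h𝓜 : ∀ M ∈ 𝓜, M.PosSemidef ∧ ((1 : Mat n) - M).PosSemidef)
    (hne : (M2 𝓜).Nonempty) :
    Emeas γ 𝓜 ρ σ = γ * Emeas (1 / γ) 𝓜 σ ρ := by
  have hγ' : (γ:ℂ) ≠ 0 := by exact_mod_cast hγ.ne'
  rw [Emeas, Emeas]
  set f : Mat n → ℝ := fun M => ((M * (ρ - (γ : ℂ) • σ)).trace).re with hf
  set g : Mat n → ℝ := fun M => ((M * (σ - ((1/γ : ℝ) : ℂ) • ρ)).trace).re with hg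
  -- closure of M2 under complement
  have hcompl : ∀ M ∈ M2 𝓜, (1 - M) ∈ M2 𝓜 := by
    rintro M ⟨h1, h2⟩
    exact ⟨h2, by rwa [sub_sub_cancel]⟩
  -- key identity
  have key : ∀ M, γ * g (1 - M) = f M + γ - 1 := by
    intro M
    have e1 : ((1 - M) * (σ - ((1/γ : ℝ) : ℂ) • ρ)).trace
        = σ.trace - ((1/γ : ℝ) : ℂ) * ρ.trace - (M*σ).trace + ((1/γ : ℝ) : ℂ) * (M*ρ).trace := by
      simp only [sub_mul, one_mul, mul_sub, mul_smul_comm, trace_sub, trace_smul, smul_eq_mul]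
      ring
    have e2 : (M * (ρ - (γ : ℂ) • σ)).trace = (M*ρ).trace - (γ:ℂ) * (M*σ).trace := by
      simp only [mul_sub, mul_smul_comm, trace_sub, trace_smul, smul_eq_mul]
    have e3 : (γ:ℂ) * ((1 - M) * (σ - ((1/γ : ℝ) : ℂ) • ρ)).trace
        = (M * (ρ - (γ : ℂ) • σ)).trace + (γ:ℂ) - 1 := by
      rw [e1, e2, hσ.2, hρ.2]
      push_cast
      field_simp
      ring
    have := congrArg Complex.re e3
    simp only [Complex.re_ofReal_mul, Complex.add_re, Complex.sub_re, Complex.one_re,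
      Complex.ofReal_re] at this
    simpa [hf, hg] using this
  -- bounded above
  have hbdd : BddAbove (f '' M2 𝓜) := by
    refine ⟨1, ?_⟩
    rintro y ⟨M, hM, rfl⟩
    obtain ⟨hMpsd, hMcpsd⟩ := h𝓜 M hM.1
    have e2 : (M * (ρ - (γ : ℂ) • σ)).trace = (M*ρ).trace - (γ:ℂ) * (M*σ).trace := by
      simp only [mul_sub, mul_smul_comm, trace_sub, trace_smul, smul_eq_mul]
    have h1 : f M = ((M*ρ).trace).re - γ * ((M*σ).trace).re := by
      show ((M * (ρ - (γ : ℂ) • σ)).trace).re = _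
      rw [e2]
      simp only [Complex.sub_re, Complex.re_ofReal_mul]
    have h2 : 0 ≤ ((M*σ).trace).re := trace_mul_re_nonneg hMpsd hσ.1
    have h3 : ((M*ρ).trace).re ≤ 1 := by
      have h4 : 0 ≤ (((1 - M)*ρ).trace).re := trace_mul_re_nonneg hMcpsd hρ.1
      have h5 : ((1 - M)*ρ).trace = 1 - (M*ρ).trace := by
        rw [sub_mul, one_mul, trace_sub, hρ.2]
      rw [h5] at h4
      simp only [Complex.sub_re, Complex.one_re] at h4
      linarith
    rw [h1]
    nlinarith
  have hnef : (f '' M2 𝓜).Nonempty := hne.image f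
  -- image relation
  have himg : g '' M2 𝓜 = (fun x => (x + γ - 1) / γ) '' (f '' M2 𝓜) := by
    ext y
    constructor
    · rintro ⟨M, hM, rfl⟩
      refine ⟨f (1 - M), ⟨1 - M, hcompl M hM, rfl⟩, ?_⟩
      have := key (1 - M)
      rw [sub_sub_cancel] at this
      field_simp
      linarith
    · rintro ⟨x, ⟨M, hM, rfl⟩, rfl⟩
      refine ⟨1 - M, hcompl M hM, ?_⟩
      have := key M
      field_simp
      linarith
  have hsup : sSup (g '' M2 𝓜) = (sSup (f '' M2 𝓜) + γ - 1) / γ := by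
    rw [himg]
    refine (Monotone.map_csSup_of_continuousAt ?_ ?_ hnef hbdd).symm
    · fun_prop
    · intro a b hab
      dsimp only
      gcongr
  have hmax : γ * max 0 (1 - 1/γ) = max 0 (γ - 1) := by
    rcases le_total γ 1 with h | h
    · have h1 : (1:ℝ) ≤ 1/γ := by rw [le_div_iff₀ hγ]; linarith
      rw [max_eq_left (by linarith), max_eq_left (by linarith), mul_zero]
    · have h1 : 1/γ ≤ 1 := by rw [div_le_one hγ]; linarith
      rw [max_eq_right (by linarith), max_eq_right (by linarith)]
      field_simp
  have hfin : γ * ((sSup (f '' M2 𝓜) + γ - 1) / γ) = sSup (f '' M2 𝓜) + γ - 1 := by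
    field_simp
  rw [hsup, mul_sub, hfin, hmax]
  rcases le_total γ 1 with h | h
  · rw [max_eq_right (by linarith : (0:ℝ) ≤ 1 - γ), max_eq_left (by linarith : γ - 1 ≤ 0)]
    ring
  · rw [max_eq_left (by linarith : 1 - γ ≤ (0:ℝ)), max_eq_right (by linarith : (0:ℝ) ≤ γ - 1)]
    ring
end
end

section
/- Let γ ≥ 0, let ρ and σ be states on ℂ^n, and let 𝓜 be a set of measurement operators (each M ∈ 𝓜 satisfies 0 ≤ M ≤ I) whose symmetrized set 𝓜₂ is nonempty. Let Φ and Ψ be linear maps on n×n complex matrices such that: Φ is trace-preserving and positive (maps positive semidefinite matrices to positive semidefinite matrices), Ψ is the Hilbert–Schmidt adjoint of Φ (i.e., Tr[Ψ(M) X] = Tr[M Φ(X)] for all matrices M, X), and Ψ(M) ∈ 𝓜 for all M ∈ 𝓜. Then E_γ^𝓜(Φ(ρ)‖Φ(σ)) ≤ E_γ^𝓜(ρ‖σ). -/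
noncomputable section
open Matrix ComplexOrder

lemma trace_mul_std {n : ℕ} (A : Mat n) (i j : Fin n) :
    (A * Matrix.single i j 1).trace = A j i := by
  simp only [Matrix.trace, Matrix.diag, Matrix.mul_apply, Matrix.single,
    Matrix.of_apply, mul_ite, mul_one, mul_zero, ite_and]
  rw [Finset.sum_comm]
  simp

lemma psd_trace_nonneg {n : ℕ} {A : Mat n} (hA : A.PosSemidef) : 0 ≤ A.trace := by
  apply Finset.sum_nonneg
  intro i _
  exact hA.diag_nonneg

open scoped MatrixOrder in
lemma trace_mul_psd_nonneg {n : ℕ} {A B : Mat n} (hA : A.PosSemidef) (hB : B.PosSemidef) :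
    0 ≤ (A * B).trace := by
  have h1 : (A * B).trace = (CFC.sqrt B * A * (CFC.sqrt B)ᴴ).trace := by
    conv_rhs => rw [(CFC.sqrt_nonneg B).posSemidef.isHermitian.eq]
    rw [Matrix.trace_mul_cycle, CFC.sqrt_mul_sqrt_self B hB.nonneg, Matrix.trace_mul_comm]
  rw [h1]
  exact psd_trace_nonneg (hA.mul_mul_conjTranspose_same _)

/-- Data processing under 𝓜-compatible channels: if `Φ` is a positive trace-preserving map
whose Hilbert–Schmidt adjoint `Ψ` maps 𝓜 into 𝓜, then the measured hockey-stick divergence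
does not increase under `Φ`. -/
theorem stmt_3 {n : ℕ} (γ : ℝ) (hγ : 0 ≤ γ) (ρ σ : Mat n)
    (hρ : IsState ρ) (hσ : IsState σ) (𝓜 : Set (Mat n))
    (h𝓜 : ∀ M ∈ 𝓜, M.PosSemidef ∧ ((1 : Mat n) - M).PosSemidef)
    (hne : (M2 𝓜).Nonempty)
    (Φ Ψ : Mat n →ₗ[ℂ] Mat n)
    (hTP : ∀ X : Mat n, (Φ X).trace = X.trace)
    (hPos : ∀ X : Mat n, X.PosSemidef → (Φ X).PosSemidef)
    (hAdj : ∀ (M X : Mat n), ((Ψ M) * X).trace = (M * Φ X).trace)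
    (hCompat : ∀ M ∈ 𝓜, Ψ M ∈ 𝓜) :
    Emeas γ 𝓜 (Φ ρ) (Φ σ) ≤ Emeas γ 𝓜 ρ σ := by
  -- Ψ maps the identity to the identity
  have hΨ1 : Ψ (1 : Mat n) = 1 := by
    ext i j
    have h := hAdj 1 (Matrix.single j i 1)
    rw [one_mul, hTP] at h
    calc Ψ 1 i j = (Ψ 1 * Matrix.single j i 1).trace := (trace_mul_std _ _ _).symm
      _ = (Matrix.single j i 1).trace := h
      _ = ((1 : Mat n) * Matrix.single j i 1).trace := by rw [one_mul]
      _ = (1 : Mat n) i j := trace_mul_std _ _ _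
  -- Ψ maps M2 into M2
  have hΨM2 : ∀ M ∈ M2 𝓜, Ψ M ∈ M2 𝓜 := by
    intro M hM
    refine ⟨hCompat M hM.1, ?_⟩
    have : (1 : Mat n) - Ψ M = Ψ (1 - M) := by rw [map_sub, hΨ1]
    rw [this]
    exact hCompat _ hM.2
  -- the two image sets
  set A := ((fun M => ((M * (Φ ρ - (γ : ℂ) • Φ σ)).trace).re) '' M2 𝓜) with hA
  set B := ((fun M => ((M * (ρ - (γ : ℂ) • σ)).trace).re) '' M2 𝓜) with hB
  have hsub : A ⊆ B := by
    rintro x ⟨M, hM, rfl⟩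
    refine ⟨Ψ M, hΨM2 M hM, ?_⟩
    have key : (Ψ M * (ρ - (γ : ℂ) • σ)).trace = (M * (Φ ρ - (γ : ℂ) • Φ σ)).trace := by
      rw [hAdj]
      congr 2
      rw [map_sub, LinearMap.map_smul]
    dsimp only
    rw [key]
  -- B is bounded above by 1
  have hbdd : BddAbove B := by
    refine ⟨1, ?_⟩
    rintro x ⟨N, hN, rfl⟩
    have hNpsd := (h𝓜 N hN.1).1
    have hNpsd' := (h𝓜 N hN.1).2
    have h1 : 0 ≤ ((N * σ).trace).re := by
      have := trace_mul_psd_nonneg hNpsd hσ.1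
      exact (Complex.le_def.mp this).1
    have h2 : ((N * ρ).trace).re ≤ 1 := by
      have hsum : (N * ρ).trace + (((1 : Mat n) - N) * ρ).trace = 1 := by
        rw [← Matrix.trace_add, ← add_mul]
        simp [hρ.2]
      have hpos : 0 ≤ ((((1 : Mat n) - N) * ρ).trace).re :=
        (Complex.le_def.mp (trace_mul_psd_nonneg hNpsd' hρ.1)).1
      have := congrArg Complex.re hsum
      simp only [Complex.add_re, Complex.one_re] at this
      linarith
    have hexp : ((N * (ρ - (γ : ℂ) • σ)).trace).re
        = ((N * ρ).trace).re - γ * ((N * σ).trace).re := by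
      rw [mul_sub, Matrix.trace_sub, mul_smul_comm, Matrix.trace_smul]
      simp [Complex.sub_re, Complex.mul_re]
    dsimp only
    rw [hexp]
    nlinarith
  have hAne : A.Nonempty := hne.image _
  have := csSup_le_csSup hbdd hAne hsub
  unfold Emeas
  exact sub_le_sub_right this _
end
end

section
/- Let d ≥ 2, p, q ∈ [0,1], and γ ≥ 1. For the Werner states ω^q and ω^p on ℂ^d ⊗ ℂ^d, the PPT-measured hockey-stick divergence satisfies E_γ^PPT(ω^q‖ω^p) = max{0, 2(q − γp)/(d+1), 1 − γ − 2(q − γp)/(d+1)}. -/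
noncomputable section
open Matrix ComplexOrder

/-- Bipartite complex matrices on ℂ^d ⊗ ℂ^d. -/
abbrev BMat (d : ℕ) := Matrix (Fin d × Fin d) (Fin d × Fin d) ℂ

/-- The swap operator `F = Σ_{i,j} |i⟩⟨j| ⊗ |j⟩⟨i|`. -/
def swapOp (d : ℕ) : BMat d :=
  fun p q => if p.1 = q.2 ∧ p.2 = q.1 then 1 else 0

/-- The symmetric Werner extreme state `Θ = (I + F)/(d(d+1))`. -/
def wΘ (d : ℕ) : BMat d := ((d : ℂ) * ((d : ℂ) + 1))⁻¹ • (1 + swapOp d)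

/-- The antisymmetric Werner extreme state `Θ⊥ = (I − F)/(d(d−1))`. -/
def wΘperp (d : ℕ) : BMat d := ((d : ℂ) * ((d : ℂ) - 1))⁻¹ • (1 - swapOp d)

/-- The Werner state `ω^p = pΘ + (1−p)Θ⊥`. -/
def werner (d : ℕ) (p : ℝ) : BMat d := (p : ℂ) • wΘ d + ((1 - p : ℝ) : ℂ) • wΘperp d

/-- The partial transpose on the second tensor factor:
`T_B(M)((a,b),(a',b')) := M((a,b'),(a',b))`. -/
def ptB {d : ℕ} (M : BMat d) : BMat d :=
  fun p q => M (p.1, q.2) (q.1, p.2)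

/-- PPT-measured hockey-stick divergence for γ ≥ 1. -/
def EgPPT {d : ℕ} (γ : ℝ) (ρ σ : BMat d) : ℝ :=
  sSup {x : ℝ | ∃ M : BMat d, M.PosSemidef ∧ ((1 : BMat d) - M).PosSemidef ∧
    (ptB M).PosSemidef ∧ ((1 : BMat d) - ptB M).PosSemidef ∧
    x = ((M * (ρ - (γ : ℂ) • σ)).trace).re}

/-! ### Auxiliary definitions and lemmas -/

/-- The matrix `K = T_B(F)`, i.e. `d` times the maximally entangled projector. -/
def Kmat (d : ℕ) : BMat d :=
  fun p q => if p.1 = p.2 ∧ q.1 = q.2 then 1 else 0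

variable {d : ℕ}

lemma F_mul_F : swapOp d * swapOp d = 1 := by
  ext ⟨a,b⟩ ⟨c,e⟩
  simp [Matrix.mul_apply, swapOp, Fintype.sum_prod_type, Matrix.one_apply, Prod.ext_iff, ite_and]

lemma K_mul_K : Kmat d * Kmat d = (d:ℂ) • Kmat d := by
  ext p q
  simp only [Matrix.mul_apply, Kmat, Matrix.smul_apply, smul_eq_mul, Fintype.sum_prod_type]
  by_cases h1 : p.1 = p.2 <;> by_cases h2 : q.1 = q.2 <;>
    simp [h1, h2, Finset.sum_ite_eq, eq_comm]

lemma F_herm : (swapOp d)ᴴ = swapOp d := by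
  ext p q
  simp only [Matrix.conjTranspose_apply, swapOp]
  by_cases h : p.1 = q.2 ∧ p.2 = q.1
  · obtain ⟨h1, h2⟩ := h; simp [h1, h2]
  · rw [if_neg h, if_neg (by tauto), star_zero]

lemma K_herm : (Kmat d)ᴴ = Kmat d := by
  ext p q
  simp only [Matrix.conjTranspose_apply, Kmat]
  by_cases h : p.1 = p.2 ∧ q.1 = q.2
  · obtain ⟨h1, h2⟩ := h; simp [h1, h2]
  · rw [if_neg h, if_neg (by tauto), star_zero]

lemma trace_F : (swapOp d).trace = d := by
  unfold Matrix.trace Matrix.diag swapOp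
  rw [Fintype.sum_prod_type]
  have h : ∀ a b : Fin d, (if a = b ∧ b = a then (1:ℂ) else 0) = if b = a then 1 else 0 :=
    fun a b => by by_cases h : b = a <;> simp [h]
  simp [h, Finset.sum_ite_eq]

lemma trace_K : (Kmat d).trace = d := by
  unfold Matrix.trace Matrix.diag Kmat
  rw [Fintype.sum_prod_type]
  simp [Finset.sum_ite_eq, and_self]

lemma trace_one' : (1 : BMat d).trace = (d:ℂ)^2 := by
  rw [Matrix.trace_one]
  simp [pow_two]

lemma ptB_one : ptB (1 : BMat d) = 1 := by
  ext p q
  simp only [ptB, Matrix.one_apply, Prod.ext_iff]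
  by_cases h1 : p.1 = q.1 <;> by_cases h2 : p.2 = q.2 <;> simp [h1, h2, eq_comm]

lemma ptB_F : ptB (swapOp d) = Kmat d := by
  ext p q; simp only [ptB, swapOp, Kmat]
  by_cases h1 : p.1 = p.2 <;> by_cases h2 : q.1 = q.2 <;> simp [h1, h2, eq_comm]

lemma ptB_K : ptB (Kmat d) = swapOp d := by
  ext p q; simp only [ptB, swapOp, Kmat]
  exact if_congr (by rw [@eq_comm _ q.1]) rfl rfl

lemma ptB_add (M N : BMat d) : ptB (M + N) = ptB M + ptB N := rfl
lemma ptB_smul (c : ℂ) (M : BMat d) : ptB (c • M) = c • ptB M := rfl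
lemma ptB_sub (M N : BMat d) : ptB (M - N) = ptB M - ptB N := rfl

lemma sum13 {α : Type*} [Fintype α] (g : α → α → α → ℂ) :
    (∑ b, ∑ x, ∑ y, g b x y) = ∑ b, ∑ x, ∑ y, g y x b :=
  calc (∑ b, ∑ x, ∑ y, g b x y)
      = ∑ x, ∑ b, ∑ y, g b x y := Finset.sum_comm
    _ = ∑ x, ∑ y, ∑ b, g b x y := Finset.sum_congr rfl fun _ _ => Finset.sum_comm
    _ = ∑ y, ∑ x, ∑ b, g b x y := Finset.sum_comm

lemma trace_mul_ptB (M N : BMat d) : (M * ptB N).trace = (ptB M * N).trace := by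
  simp only [Matrix.trace, Matrix.diag, Matrix.mul_apply, ptB, Fintype.sum_prod_type]
  refine Finset.sum_congr rfl fun a _ => ?_
  exact sum13 (fun b x y => M (a,b) (x,y) * N ((x,b)) ((a,y)))

lemma psd_of_proj {P : BMat d} (h1 : Pᴴ = P) (h2 : P * P = P) : P.PosSemidef := by
  have h := Matrix.posSemidef_self_mul_conjTranspose P
  rwa [h1, h2] at h

lemma psd_smul_real {c : ℝ} (hc : 0 ≤ c) {M : BMat d} (hM : M.PosSemidef) :
    ((c : ℂ) • M).PosSemidef := by
  constructor
  · show ((c:ℂ) • M)ᴴ = _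
    rw [Matrix.conjTranspose_smul, hM.1]
    congr 1
    simp
  · intro x
    exact (hM.smul (by exact_mod_cast hc : (0:ℂ) ≤ (c:ℂ))).2 x

lemma psd_diag_nonneg {n : Type*} [Fintype n] [DecidableEq n] {M : Matrix n n ℂ}
    (hM : M.PosSemidef) (i : n) : 0 ≤ M i i := by
  exact hM.diag_nonneg

lemma psd_trace_nonneg_s9 {n : Type*} [Fintype n] [DecidableEq n] {M : Matrix n n ℂ}
    (hM : M.PosSemidef) : 0 ≤ M.trace :=
  Finset.sum_nonneg fun i _ => psd_diag_nonneg hM i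

open scoped MatrixOrder in
lemma psd_trace_mul_nonneg {n : Type*} [Fintype n] [DecidableEq n] {A B : Matrix n n ℂ}
    (hA : A.PosSemidef) (hB : B.PosSemidef) : 0 ≤ (A * B).trace := by
  obtain ⟨C, rfl⟩ := CStarAlgebra.nonneg_iff_eq_star_mul_self.mp hB.nonneg
  rw [← Matrix.mul_assoc, Matrix.trace_mul_cycle]
  exact psd_trace_nonneg_s9 (hA.mul_mul_conjTranspose_same C)

lemma psd_one_add_F : ((1 : BMat d) + swapOp d).PosSemidef := by
  have hP : ((2⁻¹ : ℂ) • (1 + swapOp d)).PosSemidef := by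
    refine psd_of_proj ?_ ?_
    · rw [Matrix.conjTranspose_smul, Matrix.conjTranspose_add, Matrix.conjTranspose_one, F_herm]
      norm_num
    · rw [Matrix.smul_mul, Matrix.mul_smul, smul_smul]
      simp only [Matrix.add_mul, Matrix.mul_add, Matrix.one_mul, Matrix.mul_one, F_mul_F]
      module
  have := psd_smul_real (by norm_num : (0:ℝ) ≤ 2) hP
  convert this using 1
  rw [smul_smul]
  norm_num

lemma psd_one_sub_F : ((1 : BMat d) - swapOp d).PosSemidef := by
  have hP : ((2⁻¹ : ℂ) • (1 - swapOp d)).PosSemidef := by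
    refine psd_of_proj ?_ ?_
    · rw [Matrix.conjTranspose_smul, Matrix.conjTranspose_sub, Matrix.conjTranspose_one, F_herm]
      norm_num
    · rw [Matrix.smul_mul, Matrix.mul_smul, smul_smul]
      simp only [Matrix.sub_mul, Matrix.mul_sub, Matrix.one_mul, Matrix.mul_one, F_mul_F]
      module
  have := psd_smul_real (by norm_num : (0:ℝ) ≤ 2) hP
  convert this using 1
  rw [smul_smul]
  norm_num

lemma psd_K (hd : 2 ≤ d) : (Kmat d).PosSemidef := by
  have hd0 : (d:ℂ) ≠ 0 := by exact_mod_cast (by omega : d ≠ 0)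
  have hP : (((d:ℂ))⁻¹ • Kmat d).PosSemidef := by
    refine psd_of_proj ?_ ?_
    · rw [Matrix.conjTranspose_smul, K_herm]
      congr 1
      rw [← Complex.ofReal_natCast, ← Complex.ofReal_inv, Complex.star_def, Complex.conj_ofReal]
    · rw [Matrix.smul_mul, Matrix.mul_smul, smul_smul, K_mul_K, smul_smul]
      rw [inv_mul_cancel_right₀ hd0]
  have := psd_smul_real (by positivity : (0:ℝ) ≤ (d:ℝ)) hP
  convert this using 1
  rw [smul_smul]
  push_cast
  rw [mul_inv_cancel₀ hd0, one_smul]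

lemma psd_dsub_F (hd : 2 ≤ d) : ((d:ℂ) • (1 : BMat d) - swapOp d).PosSemidef := by
  have h1 : ((d:ℂ) • (1 : BMat d) - swapOp d)
      = (((d-1:ℝ)):ℂ) • (1 : BMat d) + ((1 : BMat d) - swapOp d) := by
    push_cast [Nat.one_le_iff_ne_zero]
    module
  rw [h1]
  exact (psd_smul_real (by simp; omega : (0:ℝ) ≤ (d:ℝ)-1) Matrix.PosSemidef.one).add psd_one_sub_F

lemma psd_dsub_K (hd : 2 ≤ d) : ((d:ℂ) • (1 : BMat d) - Kmat d).PosSemidef := by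
  have hd0 : (d:ℂ) ≠ 0 := by exact_mod_cast (by omega : d ≠ 0)
  have hP : ((1 : BMat d) - ((d:ℂ))⁻¹ • Kmat d).PosSemidef := by
    refine psd_of_proj ?_ ?_
    · rw [Matrix.conjTranspose_sub, Matrix.conjTranspose_one, Matrix.conjTranspose_smul, K_herm]
      congr 2
      rw [← Complex.ofReal_natCast, ← Complex.ofReal_inv, Complex.star_def, Complex.conj_ofReal]
    · simp only [Matrix.sub_mul, Matrix.mul_sub, Matrix.one_mul, Matrix.mul_one,
        Matrix.smul_mul, Matrix.mul_smul, K_mul_K, smul_smul]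
      rw [show ((d:ℂ)⁻¹ * (d:ℂ)) = 1 by field_simp]
      simp
  have := psd_smul_real (by positivity : (0:ℝ) ≤ (d:ℝ)) hP
  convert this using 1
  rw [smul_sub, smul_smul]
  push_cast
  rw [mul_inv_cancel₀ hd0, one_smul]

lemma trace_formula (hd : 2 ≤ d) (pp qq γ : ℝ) (M : BMat d) :
    (M * (werner d qq - (γ:ℂ) • werner d pp)).trace =
      (((qq - γ*pp) / (d*(d+1)) : ℝ) : ℂ) * (M.trace + (M * swapOp d).trace)
      + ((((1-qq) - γ*(1-pp)) / (d*(d-1)) : ℝ) : ℂ)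
        * (M.trace - (M * swapOp d).trace) := by
  have hd0 : (d:ℂ) ≠ 0 := by exact_mod_cast (by omega : d ≠ 0)
  have hR : (2:ℝ) ≤ (d:ℝ) := by exact_mod_cast hd
  have hd1 : (d:ℂ) + 1 ≠ 0 := by
    have h : ((d:ℝ) + 1 : ℝ) ≠ 0 := by linarith
    exact_mod_cast h
  have hd2 : (d:ℂ) - 1 ≠ 0 := by
    have h : ((d:ℝ) - 1 : ℝ) ≠ 0 := by linarith
    exact_mod_cast h
  simp only [werner, wΘ, wΘperp, smul_sub, smul_add, smul_smul,
    Matrix.mul_add, Matrix.mul_sub, Matrix.mul_smul, Matrix.mul_one,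
    Matrix.trace_add, Matrix.trace_sub, Matrix.trace_smul, smul_eq_mul]
  push_cast
  field_simp
  ring

/-- The elementary linear-programming bound. -/
lemma lp_bound {A B Z Y : ℝ} (hAB : A + B ≤ 0) (hZ0 : 0 ≤ Z) (hZ1 : Z ≤ 1)
    (hY0 : 0 ≤ Y) (hY1 : Y ≤ 1) :
    A * Z + B * Y ≤ max 0 (max A B) := by
  rcases le_total A 0 with hA | hA <;> rcases le_total B 0 with hB | hB
  · have h1 : A * Z ≤ 0 := mul_nonpos_of_nonpos_of_nonneg hA hZ0
    have h2 : B * Y ≤ 0 := mul_nonpos_of_nonpos_of_nonneg hB hY0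
    calc A * Z + B * Y ≤ 0 := by linarith
      _ ≤ _ := le_max_left _ _
  · have h1 : A * Z ≤ 0 := mul_nonpos_of_nonpos_of_nonneg hA hZ0
    have h2 : B * Y ≤ B := by nlinarith
    calc A * Z + B * Y ≤ B := by linarith
      _ ≤ _ := le_max_of_le_right (le_max_right _ _)
  · have h1 : A * Z ≤ A := by nlinarith
    have h2 : B * Y ≤ 0 := mul_nonpos_of_nonpos_of_nonneg hB hY0
    calc A * Z + B * Y ≤ A := by linarith
      _ ≤ _ := le_max_of_le_right (le_max_left _ _)
  · have hA0 : A = 0 := le_antisymm (by linarith) hA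
    have hB0 : B = 0 := le_antisymm (by linarith) hB
    simp [hA0, hB0]

lemma one_sub_inv_smul {c : ℂ} (hc : c ≠ 0) (X : BMat d) :
    (1 : BMat d) - c⁻¹ • X = c⁻¹ • (c • (1 : BMat d) - X) := by
  rw [smul_sub, smul_smul, inv_mul_cancel₀ hc, one_smul]

set_option maxHeartbeats 1600000 in
/-- PPT-measured hockey-stick divergence for Werner states. -/
theorem stmt_9 (d : ℕ) (hd : 2 ≤ d) (p q : ℝ)
    (hp : p ∈ Set.Icc (0 : ℝ) 1) (hq : q ∈ Set.Icc (0 : ℝ) 1)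
    (γ : ℝ) (hγ : 1 ≤ γ) :
    EgPPT γ (werner d q) (werner d p) =
      max 0 (max (2 * (q - γ * p) / (d + 1)) (1 - γ - 2 * (q - γ * p) / (d + 1))) := by
  have hR : (2:ℝ) ≤ (d:ℝ) := by exact_mod_cast hd
  have hd0 : (d:ℝ) ≠ 0 := by linarith
  have hd1 : (d:ℝ) + 1 ≠ 0 := by linarith
  have hd2 : (d:ℝ) - 1 ≠ 0 := by linarith
  have hd1c : (d:ℂ) + 1 ≠ 0 := by exact_mod_cast hd1
  set A : ℝ := 2 * (q - γ * p) / (d + 1) with hA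
  set B : ℝ := 1 - γ - 2 * (q - γ * p) / (d + 1) with hB
  have hAB : A + B ≤ 0 := by rw [hA, hB]; ring_nf; linarith
  set RHS : ℝ := max 0 (max A B) with hRHS
  set s : Set ℝ := {x : ℝ | ∃ M : BMat d, M.PosSemidef ∧ ((1 : BMat d) - M).PosSemidef ∧
    (ptB M).PosSemidef ∧ ((1 : BMat d) - ptB M).PosSemidef ∧
    x = ((M * (werner d q - (γ : ℂ) • werner d p)).trace).re} with hs
  -- Upper bound for any element of s
  have hub : ∀ x ∈ s, x ≤ RHS := by
    rintro x ⟨M, hM, hM1, hMp, hMp1, rfl⟩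
    -- the four trace constraints
    set t1 : ℂ := M.trace with ht1
    set t2 : ℂ := (M * swapOp d).trace with ht2
    have c1 : 0 ≤ (t1 - t2).re := by
      have h := psd_trace_mul_nonneg hM psd_one_sub_F
      rw [Matrix.mul_sub, Matrix.mul_one, Matrix.trace_sub] at h
      exact (Complex.le_def.mp h).1
    have c2 : (t1 - t2).re ≤ (d:ℝ)^2 - d := by
      have h := psd_trace_mul_nonneg hM1 psd_one_sub_F
      rw [Matrix.sub_mul, Matrix.one_mul, Matrix.trace_sub, Matrix.mul_sub, Matrix.mul_one,
        Matrix.trace_sub, Matrix.trace_sub, trace_one', trace_F] at h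
      have := (Complex.le_def.mp h).1
      simp only [Complex.zero_re, Complex.sub_re, Complex.ofReal_natCast] at this ⊢
      have hre : ((d:ℂ)^2).re = (d:ℝ)^2 := by
        rw [show ((d:ℂ)^2) = (((d:ℝ)^2 : ℝ) : ℂ) by push_cast; ring, Complex.ofReal_re]
      have him : ((d:ℂ)).re = (d:ℝ) := by simp
      rw [hre, him] at this
      linarith
    have c3 : 0 ≤ t2.re := by
      have h := psd_trace_mul_nonneg hMp (psd_K hd)
      rw [← trace_mul_ptB, ptB_K] at h
      exact (Complex.le_def.mp h).1
    have c4 : t2.re ≤ (d:ℝ) := by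
      have h := psd_trace_mul_nonneg hMp1 (psd_K hd)
      rw [Matrix.sub_mul, Matrix.one_mul, Matrix.trace_sub, ← trace_mul_ptB, ptB_K, trace_K] at h
      have := (Complex.le_def.mp h).1
      simp only [Complex.zero_re, Complex.sub_re, Complex.natCast_re] at this
      linarith
    -- the value
    have hval : ((M * (werner d q - (γ : ℂ) • werner d p)).trace).re =
        ((q - γ*p) / (d*(d+1))) * (t1 + t2).re
        + (((1-q) - γ*(1-p)) / (d*(d-1))) * (t1 - t2).re := by
      rw [trace_formula hd p q γ M]
      simp only [Complex.add_re, Complex.sub_re, Complex.re_ofReal_mul]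
      rfl
    rw [hval]
    -- set real variables
    set T : ℝ := t2.re with hT
    set U : ℝ := (t1 - t2).re with hU
    have hsum : (t1 + t2).re = U + 2 * T := by
      simp only [hU, hT, Complex.add_re, Complex.sub_re]; ring
    rw [hsum]
    have hiden : ((q - γ*p) / (d*(d+1))) * (U + 2*T)
        + (((1-q) - γ*(1-p)) / (d*(d-1))) * U
        = A * (T / d) + B * (U / (d*(d-1))) := by
      rw [hA, hB]
      field_simp
      ring
    rw [hiden, hRHS]
    refine lp_bound hAB ?_ ?_ ?_ ?_
    · positivity
    · rw [div_le_one (by linarith)]; exact c4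
    · have : (0:ℝ) < d*(d-1) := by nlinarith
      positivity
    · rw [div_le_one (by nlinarith)]; nlinarith
  -- Membership of the three candidate values
  have hmem0 : (0:ℝ) ∈ s := by
    refine ⟨0, Matrix.PosSemidef.zero, ?_, ?_, ?_, ?_⟩
    · simpa using Matrix.PosSemidef.one
    · show (ptB 0).PosSemidef
      have : ptB (0 : BMat d) = 0 := rfl
      rw [this]; exact Matrix.PosSemidef.zero
    · have : ptB (0 : BMat d) = 0 := rfl
      rw [this]; simpa using Matrix.PosSemidef.one
    · rw [Matrix.zero_mul, Matrix.trace_zero]; simp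
  have hcast : (((((d:ℝ))+1)⁻¹ : ℝ) : ℂ) = ((d:ℂ)+1)⁻¹ := by push_cast; ring
  have hmemA : A ∈ s := by
    refine ⟨((d:ℂ)+1)⁻¹ • (1 + swapOp d), ?_, ?_, ?_, ?_, ?_⟩
    · rw [← hcast]
      exact psd_smul_real (by positivity) psd_one_add_F
    · rw [one_sub_inv_smul hd1c, ← hcast]
      refine psd_smul_real (by positivity) ?_
      have : ((d:ℂ)+1) • (1 : BMat d) - (1 + swapOp d) = (d:ℂ) • (1 : BMat d) - swapOp d := by
        module
      rw [this]
      exact psd_dsub_F hd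
    · rw [ptB_smul, ptB_add, ptB_one, ptB_F, ← hcast]
      exact psd_smul_real (by positivity) (Matrix.PosSemidef.one.add (psd_K hd))
    · rw [ptB_smul, ptB_add, ptB_one, ptB_F, one_sub_inv_smul hd1c, ← hcast]
      refine psd_smul_real (by positivity) ?_
      have : ((d:ℂ)+1) • (1 : BMat d) - (1 + Kmat d) = (d:ℂ) • (1 : BMat d) - Kmat d := by
        module
      rw [this]
      exact psd_dsub_K hd
    · rw [Matrix.smul_mul, Matrix.trace_smul, trace_formula hd p q γ]
      have e1 : ((1 : BMat d) + swapOp d).trace = (d:ℂ)^2 + d := by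
        rw [Matrix.trace_add, trace_one', trace_F]
      have e2 : (((1 : BMat d) + swapOp d) * swapOp d).trace = (d:ℂ) + (d:ℂ)^2 := by
        rw [Matrix.add_mul, Matrix.one_mul, F_mul_F, Matrix.trace_add, trace_F, trace_one']
      rw [e1, e2]
      have : ((d:ℂ)+1)⁻¹ • ((((q - γ*p) / (d*(d+1)) : ℝ) : ℂ) * (((d:ℂ)^2 + d) + ((d:ℂ) + (d:ℂ)^2))
          + ((((1-q) - γ*(1-p)) / (d*(d-1)) : ℝ) : ℂ) * (((d:ℂ)^2 + d) - ((d:ℂ) + (d:ℂ)^2)))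
          = ((A : ℝ) : ℂ) := by
        rw [hA]
        have hd0c : (d:ℂ) ≠ 0 := by exact_mod_cast hd0
        push_cast
        rw [smul_eq_mul]
        field_simp
        ring
      rw [this, Complex.ofReal_re]
  have hmemB : B ∈ s := by
    refine ⟨((d:ℂ)+1)⁻¹ • ((d:ℂ) • 1 - swapOp d), ?_, ?_, ?_, ?_, ?_⟩
    · rw [← hcast]
      exact psd_smul_real (by positivity) (psd_dsub_F hd)
    · rw [one_sub_inv_smul hd1c, ← hcast]
      refine psd_smul_real (by positivity) ?_
      have : ((d:ℂ)+1) • (1 : BMat d) - ((d:ℂ) • 1 - swapOp d) = 1 + swapOp d := by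
        module
      rw [this]
      exact psd_one_add_F
    · have hpt : ptB ((d:ℂ) • (1:BMat d) - swapOp d) = (d:ℂ) • 1 - Kmat d := by
        rw [ptB_sub, ptB_smul, ptB_one, ptB_F]
      rw [ptB_smul, hpt, ← hcast]
      exact psd_smul_real (by positivity) (psd_dsub_K hd)
    · have hpt : ptB ((d:ℂ) • (1:BMat d) - swapOp d) = (d:ℂ) • 1 - Kmat d := by
        rw [ptB_sub, ptB_smul, ptB_one, ptB_F]
      rw [ptB_smul, hpt, one_sub_inv_smul hd1c, ← hcast]
      refine psd_smul_real (by positivity) ?_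
      have : ((d:ℂ)+1) • (1 : BMat d) - ((d:ℂ) • 1 - Kmat d) = 1 + Kmat d := by
        module
      rw [this]
      exact Matrix.PosSemidef.one.add (psd_K hd)
    · rw [Matrix.smul_mul, Matrix.trace_smul, trace_formula hd p q γ]
      have e1 : ((d:ℂ) • (1 : BMat d) - swapOp d).trace = (d:ℂ)*(d:ℂ)^2 - d := by
        rw [Matrix.trace_sub, Matrix.trace_smul, trace_one', trace_F, smul_eq_mul]
      have e2 : (((d:ℂ) • (1 : BMat d) - swapOp d) * swapOp d).trace = (d:ℂ)*(d:ℂ) - (d:ℂ)^2 := by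
        rw [Matrix.sub_mul, Matrix.smul_mul, Matrix.one_mul, F_mul_F, Matrix.trace_sub,
          Matrix.trace_smul, trace_F, trace_one', smul_eq_mul]
      rw [e1, e2]
      have : ((d:ℂ)+1)⁻¹ • ((((q - γ*p) / (d*(d+1)) : ℝ) : ℂ)
            * (((d:ℂ)*(d:ℂ)^2 - d) + ((d:ℂ)*(d:ℂ) - (d:ℂ)^2))
          + ((((1-q) - γ*(1-p)) / (d*(d-1)) : ℝ) : ℂ)
            * (((d:ℂ)*(d:ℂ)^2 - d) - ((d:ℂ)*(d:ℂ) - (d:ℂ)^2)))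
          = ((B : ℝ) : ℂ) := by
        rw [hB]
        have hd0c : (d:ℂ) ≠ 0 := by exact_mod_cast hd0
        have hd2c : (d:ℂ) - 1 ≠ 0 := by exact_mod_cast hd2
        push_cast
        rw [smul_eq_mul]
        field_simp
        ring
      rw [this, Complex.ofReal_re]
  -- conclude
  have hEg : EgPPT γ (werner d q) (werner d p) = sSup s := rfl
  rw [hEg]
  have hbdd : BddAbove s := ⟨RHS, hub⟩
  have hR0 : (0:ℝ) ≤ RHS := le_max_left _ _
  refine le_antisymm (Real.sSup_le hub hR0) ?_
  rw [hRHS]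
  refine max_le (le_csSup hbdd hmem0) (max_le (le_csSup hbdd hmemA) (le_csSup hbdd hmemB))
end
end

section
/- Let d ≥ 2 and γ ≥ 1. For Werner states on ℂ^d ⊗ ℂ^d: (i) sup_{p,q ∈ [0,1]} E_γ(ω^q‖ω^p) = 1 (so the identity mechanism on Werner states admits no nontrivial privacy guarantee against all measurements), while (ii) sup_{p,q ∈ [0,1]} E_γ^PPT(ω^q‖ω^p) = 2/(d+1) (so it is (ε, 2/(d+1))-private against PPT measurements, with δ vanishing as d → ∞). -/
noncomputable section
open Matrix ComplexOrder

/-- Hockey-stick divergence (all measurements) for γ ≥ 1. -/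
def Eg {d : ℕ} (γ : ℝ) (ρ σ : BMat d) : ℝ :=
  sSup {x : ℝ | ∃ M : BMat d, M.PosSemidef ∧ ((1 : BMat d) - M).PosSemidef ∧
    x = ((M * (ρ - (γ : ℂ) • σ)).trace).re}

/-! ### Auxiliary definitions -/

def wv (d : ℕ) : Fin d × Fin d → ℂ := fun p => if p.1 = p.2 then 1 else 0
def Gm (d : ℕ) : BMat d := fun p q => wv d p * wv d q
def Sm (d : ℕ) : BMat d := 1 + swapOp d
def Am (d : ℕ) : BMat d := 1 - swapOp d

namespace WernerAux

variable {d : ℕ}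

/-! ### Entrywise algebra -/

lemma star_wv (p : Fin d × Fin d) : star (wv d p) = wv d p := by
  unfold wv; split <;> simp

lemma sum_wv_mul_wv : ∑ p, wv d p * wv d p = (d : ℂ) := by
  unfold wv
  rw [Fintype.sum_prod_type]
  simp [ite_and, Finset.sum_ite_eq]

lemma swap_mul_swap : swapOp d * swapOp d = 1 := by
  ext ⟨a,b⟩ ⟨c,e⟩
  rw [mul_apply, Finset.sum_eq_single (b,a)]
  · rw [show swapOp d (a,b) (b,a) = 1 from if_pos ⟨rfl, rfl⟩, one_mul]
    by_cases h : a = c ∧ b = e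
    · obtain ⟨h1, h2⟩ := h; subst h1; subst h2
      rw [show swapOp d (b,a) (a,b) = 1 from if_pos ⟨rfl, rfl⟩, one_apply_eq]
    · rw [show (1 : BMat d) (a,b) (c,e) = 0 from by
        simp only [one_apply, Prod.ext_iff]; rw [if_neg h]]
      show (if b = e ∧ a = c then (1:ℂ) else 0) = 0
      rw [if_neg]
      rintro ⟨h1, h2⟩; exact h ⟨h2, h1⟩
  · rintro ⟨u,v⟩ - h
    simp only [swapOp]
    rw [if_neg]
    · simp
    · rintro ⟨h1, h2⟩; exact h (by simp [Prod.ext_iff, h1.symm, h2.symm])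
  · simp

lemma swap_herm : (swapOp d)ᴴ = swapOp d := by
  ext ⟨a,b⟩ ⟨c,e⟩
  simp only [conjTranspose_apply, swapOp]
  by_cases h : c = b ∧ e = a
  · obtain ⟨h1, h2⟩ := h; simp [h1, h2]
  · rw [if_neg h, if_neg, star_zero]
    rintro ⟨h1, h2⟩; exact h ⟨h2.symm, h1.symm⟩

lemma trace_swap : (swapOp d).trace = (d : ℂ) := by
  have : (swapOp d).trace = ∑ p, wv d p * wv d p := by
    apply Finset.sum_congr rfl
    rintro ⟨a,b⟩ -
    simp only [diag_apply, swapOp, wv]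
    by_cases h : a = b
    · simp [h]
    · simp [h, fun hh : b = a => h hh.symm]
  rw [this, sum_wv_mul_wv]

lemma trace_one_bmat : (1 : BMat d).trace = ((d : ℂ))^2 := by
  rw [trace_one]
  simp only [Fintype.card_prod, Fintype.card_fin]
  push_cast; ring

lemma ptB_swap : ptB (swapOp d) = Gm d := by
  ext ⟨a,b⟩ ⟨c,e⟩
  show (if a = b ∧ e = c then (1:ℂ) else 0) = (if a = b then 1 else 0) * (if c = e then 1 else 0)
  by_cases h1 : a = b <;> by_cases h2 : c = e
  · rw [if_pos ⟨h1, h2.symm⟩, if_pos h1, if_pos h2, one_mul]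
  · rw [if_neg (fun h => h2 h.2.symm), if_neg h2, mul_zero]
  · rw [if_neg (fun h => h1 h.1), if_neg h1, zero_mul]
  · rw [if_neg (fun h => h1 h.1), if_neg h1, zero_mul]

lemma ptB_one : ptB (1 : BMat d) = 1 := by
  ext ⟨a,b⟩ ⟨c,e⟩
  show (1 : BMat d) (a, e) (c, b) = (1 : BMat d) (a,b) (c,e)
  simp only [one_apply, Prod.ext_iff]
  by_cases h1 : a = c <;> by_cases h2 : b = e
  · rw [if_pos ⟨h1, h2.symm⟩, if_pos ⟨h1, h2⟩]
  · rw [if_neg (fun h => h2 h.2.symm), if_neg (fun h => h2 h.2)]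
  · rw [if_neg (fun h => h1 h.1), if_neg (fun h => h1 h.1)]
  · rw [if_neg (fun h => h1 h.1), if_neg (fun h => h1 h.1)]

lemma ptB_add (M N : BMat d) : ptB (M + N) = ptB M + ptB N := rfl

lemma ptB_smul (c : ℂ) (M : BMat d) : ptB (c • M) = c • ptB M := rfl

lemma Gm_herm : (Gm d)ᴴ = Gm d := by
  ext p q
  simp only [conjTranspose_apply, Gm, star_mul', star_wv]
  ring

lemma Gm_mul_Gm : Gm d * Gm d = (d : ℂ) • Gm d := by
  ext p q
  rw [mul_apply]
  simp only [Gm, Matrix.smul_apply, smul_eq_mul]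
  have : ∀ r, wv d p * wv d r * (wv d r * wv d q)
      = (wv d r * wv d r) * (wv d p * wv d q) := fun r => by ring
  rw [Finset.sum_congr rfl fun r _ => this r, ← Finset.sum_mul, sum_wv_mul_wv]

/-! ### PSD machinery -/

lemma smul_psd {c : ℝ} (hc : 0 ≤ c) {M : BMat d} (hM : M.PosSemidef) :
    ((c : ℂ) • M).PosSemidef := by
  refine posSemidef_iff_dotProduct_mulVec.mpr ⟨?_, ?_⟩
  · unfold Matrix.IsHermitian
    rw [conjTranspose_smul, hM.1]
    congr 1
    simp
  · intro x
    rw [smul_mulVec, dotProduct_smul, smul_eq_mul]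
    exact mul_nonneg (by exact_mod_cast hc) (hM.dotProduct_mulVec_nonneg x)

lemma herm_scaled_idem_psd {H : BMat d} (hH : Hᴴ = H) {c : ℝ} (hc : 0 < c)
    (hHH : H * H = ((c : ℝ) : ℂ) • H) : H.PosSemidef := by
  have : H = ((c⁻¹ : ℝ) : ℂ) • (Hᴴ * H) := by
    rw [hH, hHH, smul_smul]
    push_cast
    rw [inv_mul_cancel₀ (by exact_mod_cast hc.ne'), one_smul]
  rw [this]
  exact smul_psd (by positivity) (posSemidef_conjTranspose_mul_self H)

lemma psd_diag_nonneg {P : BMat d} (hP : P.PosSemidef) (i : Fin d × Fin d) :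
    0 ≤ P i i := by
  have h := hP.dotProduct_mulVec_nonneg (Pi.single i 1)
  simpa [dotProduct, mulVec, Pi.single_apply, Finset.sum_ite_eq, ite_mul, mul_ite] using h

lemma psd_trace_re_nonneg {P : BMat d} (hP : P.PosSemidef) : 0 ≤ P.trace.re := by
  have : P.trace = ∑ i, P i i := rfl
  rw [this, Complex.re_sum]
  exact Finset.sum_nonneg fun i _ => (Complex.le_def.mp (psd_diag_nonneg hP i)).1

open scoped MatrixOrder in
lemma trace_mul_psd_re_nonneg {M N : BMat d} (hM : M.PosSemidef) (hN : N.PosSemidef) :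
    0 ≤ ((M * N).trace).re := by
  have h1 : M * N = M * CFC.sqrt N * CFC.sqrt N := by
    rw [mul_assoc, CFC.sqrt_mul_sqrt_self N (nonneg_iff_posSemidef.mpr hN)]
  rw [h1, Matrix.trace_mul_cycle]
  have : CFC.sqrt N * M * CFC.sqrt N = (CFC.sqrt N)ᴴ * M * CFC.sqrt N := by
    rw [(nonneg_iff_posSemidef.mp (CFC.sqrt_nonneg N)).1]
  rw [this]
  exact psd_trace_re_nonneg (hM.conjTranspose_mul_mul_same _)

/-! ### S, A algebra -/

lemma Sm_herm : (Sm d)ᴴ = Sm d := by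
  unfold Sm; rw [conjTranspose_add, conjTranspose_one, swap_herm]

lemma Am_herm : (Am d)ᴴ = Am d := by
  unfold Am; rw [conjTranspose_sub, conjTranspose_one, swap_herm]

lemma Sm_mul_Sm : Sm d * Sm d = (((2:ℝ)) : ℂ) • Sm d := by
  unfold Sm
  rw [add_mul, mul_add, mul_add, swap_mul_swap]
  simp only [one_mul, mul_one]
  push_cast
  rw [two_smul]
  abel

lemma Am_mul_Am : Am d * Am d = (((2:ℝ)) : ℂ) • Am d := by
  unfold Am
  rw [sub_mul, mul_sub, mul_sub, swap_mul_swap]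
  simp only [one_mul, mul_one]
  push_cast
  rw [two_smul]
  abel

lemma Sm_mul_Am : Sm d * Am d = 0 := by
  unfold Sm Am
  rw [add_mul, mul_sub, mul_sub, swap_mul_swap]
  simp only [one_mul, mul_one]
  abel

lemma Sm_psd : (Sm d).PosSemidef :=
  herm_scaled_idem_psd Sm_herm (by norm_num) Sm_mul_Sm

lemma Am_psd : (Am d).PosSemidef :=
  herm_scaled_idem_psd Am_herm (by norm_num) Am_mul_Am

lemma Gm_psd (hd : 0 < d) : (Gm d).PosSemidef := by
  refine herm_scaled_idem_psd Gm_herm (c := (d:ℝ)) (by exact_mod_cast hd) ?_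
  rw [Gm_mul_Gm]; norm_num

lemma Sm_sub_Am : Sm d - Am d = (2 : ℂ) • swapOp d := by
  unfold Sm Am
  rw [two_smul]
  abel

lemma trace_Sm : (Sm d).trace = (((d:ℝ)^2 + (d:ℝ) : ℝ) : ℂ) := by
  unfold Sm
  rw [trace_add, trace_one_bmat, trace_swap]
  push_cast; ring

lemma trace_Am : (Am d).trace = (((d:ℝ)^2 - (d:ℝ) : ℝ) : ℂ) := by
  unfold Am
  rw [trace_sub, trace_one_bmat, trace_swap]
  push_cast; ring

lemma dGm_psd (hd : 0 < d) : ((d : ℂ) • 1 - Gm d).PosSemidef := by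
  refine herm_scaled_idem_psd ?_ (c := (d:ℝ)) (by exact_mod_cast hd) ?_
  · rw [conjTranspose_sub, conjTranspose_smul, conjTranspose_one, Gm_herm, star_natCast]
  · rw [sub_mul, mul_sub, mul_sub, Gm_mul_Gm, smul_mul_assoc, one_mul, mul_smul_comm,
      mul_one, smul_mul_assoc, one_mul]
    push_cast
    rw [smul_sub, smul_smul]
    abel

/-! ### Quadratic form of the partial transpose against the max-entangled vector -/

lemma quad_G (M : BMat d) :
    dotProduct (star (wv d)) (ptB M *ᵥ wv d) = (M * swapOp d).trace := by
  have lhs : dotProduct (star (wv d)) (ptB M *ᵥ wv d) = ∑ i, ∑ j, M (i, j) (j, i) := by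
    unfold dotProduct mulVec ptB wv
    simp only [Pi.star_apply, apply_ite (star : ℂ → ℂ), star_one, star_zero]
    simp only [Fintype.sum_prod_type, ite_mul, one_mul, zero_mul, mul_ite, mul_one, mul_zero,
      Finset.sum_ite_eq, Finset.sum_ite_eq', Finset.mem_univ, if_true]
    simp only [dotProduct, Fintype.sum_prod_type, mul_ite, mul_one, mul_zero,
      Finset.sum_ite_eq, Finset.sum_ite_eq', Finset.mem_univ, if_true]
  have rhs : (M * swapOp d).trace = ∑ i, ∑ j, M (i, j) (j, i) := by
    unfold Matrix.trace
    simp only [diag_apply, mul_apply]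
    unfold swapOp
    simp only [diag_apply, mul_apply, Fintype.sum_prod_type, ite_and, mul_ite, mul_one, mul_zero,
      Finset.sum_ite_eq, Finset.sum_ite_eq', Finset.mem_univ, if_true]
    have h3 : ∀ (x x1 x2 : Fin d),
        (∑ x3, if x2 = x1 then if x3 = x then M (x,x1) (x2,x3) else 0 else 0)
        = if x2 = x1 then M (x,x1) (x2,x) else 0 := by
      intro x x1 x2; by_cases h : x2 = x1 <;> simp [h, Finset.sum_ite_eq']
    simp only [h3, Finset.sum_ite_eq', Finset.mem_univ, if_true]
  rw [lhs, rhs]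

lemma norm_wv : dotProduct (star (wv d)) (wv d) = (d : ℂ) := by
  unfold dotProduct wv
  rw [Fintype.sum_prod_type]
  simp [ite_and, Finset.sum_ite_eq, apply_ite]

/-! ### Decomposition of the Werner difference -/

lemma werner_sub (hd : 2 ≤ d) (γ p q : ℝ) :
    werner d q - (γ : ℂ) • werner d p
      = ((((q - γ*p)/((d:ℝ)*((d:ℝ)+1))) : ℝ) : ℂ) • Sm d
        + (((((1-q) - γ*(1-p))/((d:ℝ)*((d:ℝ)-1))) : ℝ) : ℂ) • Am d := by
  have h0 : ((d:ℂ)) ≠ 0 := by exact_mod_cast (by omega : d ≠ 0)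
  have h1 : ((d:ℂ)) + 1 ≠ 0 := by
    intro h
    have : ((d:ℂ)) = -1 := by linear_combination h
    have : ((d:ℝ)) = -1 := by exact_mod_cast this
    have : (2:ℝ) ≤ (d:ℝ) := by exact_mod_cast hd
    linarith
  have h2 : ((d:ℂ)) - 1 ≠ 0 := by
    intro h
    have : ((d:ℂ)) = 1 := by linear_combination h
    have : ((d:ℝ)) = 1 := by exact_mod_cast this
    have : (2:ℝ) ≤ (d:ℝ) := by exact_mod_cast hd
    linarith
  unfold werner wΘ wΘperp Sm Am
  match_scalars
  · push_cast
    field_simp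
    ring
  · push_cast
    field_simp
    ring

/-! ### Objective evaluation -/

lemma obj_eq (M : BMat d) (c1 c2 : ℝ) :
    ((M * (((c1 : ℝ) : ℂ) • Sm d + ((c2 : ℝ) : ℂ) • Am d)).trace).re
      = c1 * ((M * Sm d).trace).re + c2 * ((M * Am d).trace).re := by
  rw [mul_add, trace_add, mul_smul_comm, mul_smul_comm, trace_smul, trace_smul]
  simp [Complex.add_re, Complex.re_ofReal_mul, smul_eq_mul]

lemma obj_smulSm (c c1 c2 : ℝ) :
    (((((c : ℝ) : ℂ) • Sm d) * (((c1 : ℝ) : ℂ) • Sm d + ((c2 : ℝ) : ℂ) • Am d)).trace).re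
      = c * c1 * (2*((d:ℝ)^2 + (d:ℝ))) := by
  rw [obj_eq]
  rw [smul_mul_assoc, smul_mul_assoc, Sm_mul_Sm, Sm_mul_Am, smul_zero, trace_zero,
    trace_smul, trace_smul, trace_Sm]
  simp only [smul_eq_mul, Complex.re_ofReal_mul, Complex.zero_re, mul_zero, add_zero,
    Complex.ofReal_re]
  ring

/-! ### Real-algebra core inequalities -/

lemma key_all_core (a b q α β : ℝ) (haq : a ≤ q) (hbq : b ≤ 1 - q)
    (hq0 : 0 ≤ q) (hq1 : q ≤ 1) (hα0 : 0 ≤ α) (hα1 : α ≤ 1) (hβ0 : 0 ≤ β) (hβ1 : β ≤ 1) :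
    a*α + b*β ≤ 1 := by
  rcases le_or_gt a 0 with ha | ha <;> rcases le_or_gt b 0 with hb | hb <;>
    nlinarith [mul_nonneg hα0 hβ0]

lemma key_ppt_core (D a b α β : ℝ) (hD : 2 ≤ D) (ha : a ≤ 1) (hb : b ≤ 1) (hab : a + b ≤ 0)
    (hα0 : 0 ≤ α) (hα1 : α ≤ 1) (hβ0 : 0 ≤ β) (hβ1 : β ≤ 1)
    (hf0 : 0 ≤ (D+1)*α - (D-1)*β) (hf2 : (D+1)*α - (D-1)*β ≤ 2) :
    a*α + b*β ≤ 2/(D+1) := by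
  have hD1 : (0:ℝ) < D + 1 := by linarith
  rw [le_div_iff₀ hD1]
  rcases le_total β α with h | h
  · have ht : (D+1)*(α-β) ≤ 2 := by nlinarith
    rcases le_or_gt a 0 with ha0 | ha0
    · have hobj : a*α + b*β ≤ 0 := by
        nlinarith [mul_nonneg (neg_nonneg.2 hab) hβ0,
          mul_nonneg (neg_nonneg.2 ha0) (sub_nonneg.2 h)]
      nlinarith
    · nlinarith [mul_le_mul_of_nonneg_left ht ha0.le,
        mul_nonneg (mul_nonneg (by linarith : (0:ℝ) ≤ -(a+b)) hβ0) hD1.le]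
  · have ht : (D+1)*(β-α) ≤ 2 := by nlinarith
    rcases le_or_gt b 0 with hb0 | hb0
    · have hobj : a*α + b*β ≤ 0 := by
        nlinarith [mul_nonneg (neg_nonneg.2 hab) hα0,
          mul_nonneg (neg_nonneg.2 hb0) (sub_nonneg.2 h)]
      nlinarith
    · nlinarith [mul_le_mul_of_nonneg_left ht hb0.le,
        mul_nonneg (mul_nonneg (by linarith : (0:ℝ) ≤ -(a+b)) hα0) hD1.le]

lemma wrap_all (D γ p q x y : ℝ) (hD : 2 ≤ D) (hγ : 1 ≤ γ)
    (hp0 : 0 ≤ p) (hp1 : p ≤ 1) (hq0 : 0 ≤ q) (hq1 : q ≤ 1)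
    (hx0 : 0 ≤ x) (hx1 : x ≤ D^2 + D) (hy0 : 0 ≤ y) (hy1 : y ≤ D^2 - D) :
    (q - γ*p)/(D*(D+1)) * x + ((1-q) - γ*(1-p))/(D*(D-1)) * y ≤ 1 := by
  have hDp : (0:ℝ) < D^2 + D := by nlinarith
  have hDm : (0:ℝ) < D^2 - D := by nlinarith
  have e1 : (q - γ*p)/(D*(D+1)) * x = (q - γ*p) * (x/(D^2+D)) := by
    rw [div_mul_eq_mul_div, mul_div_assoc]; ring_nf
  have e2 : ((1-q) - γ*(1-p))/(D*(D-1)) * y = ((1-q) - γ*(1-p)) * (y/(D^2-D)) := by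
    rw [div_mul_eq_mul_div, mul_div_assoc]; ring_nf
  rw [e1, e2]
  refine key_all_core _ _ q _ _ ?_ ?_ hq0 hq1 (by positivity) ((div_le_one hDp).2 hx1)
    (by positivity) ((div_le_one hDm).2 hy1)
  · nlinarith [mul_nonneg (by linarith : (0:ℝ) ≤ γ) hp0]
  · nlinarith [mul_nonneg (by linarith : (0:ℝ) ≤ γ - 1) (by linarith : (0:ℝ) ≤ 1 - p)]

lemma wrap_ppt (D γ p q x y : ℝ) (hD : 2 ≤ D) (hγ : 1 ≤ γ)
    (hp0 : 0 ≤ p) (hp1 : p ≤ 1) (hq0 : 0 ≤ q) (hq1 : q ≤ 1)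
    (hx0 : 0 ≤ x) (hx1 : x ≤ D^2 + D) (hy0 : 0 ≤ y) (hy1 : y ≤ D^2 - D)
    (hf0 : 0 ≤ x - y) (hf2 : x - y ≤ 2*D) :
    (q - γ*p)/(D*(D+1)) * x + ((1-q) - γ*(1-p))/(D*(D-1)) * y ≤ 2/(D+1) := by
  have hD0 : (0:ℝ) < D := by linarith
  have hDp : (0:ℝ) < D^2 + D := by nlinarith
  have hDm : (0:ℝ) < D^2 - D := by nlinarith
  have e1 : (q - γ*p)/(D*(D+1)) * x = (q - γ*p) * (x/(D^2+D)) := by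
    rw [div_mul_eq_mul_div, mul_div_assoc]; ring_nf
  have e2 : ((1-q) - γ*(1-p))/(D*(D-1)) * y = ((1-q) - γ*(1-p)) * (y/(D^2-D)) := by
    rw [div_mul_eq_mul_div, mul_div_assoc]; ring_nf
  rw [e1, e2]
  have hid : (D+1)*(x/(D^2+D)) - (D-1)*(y/(D^2-D)) = (x - y)/D := by
    have : D - 1 ≠ 0 := by linarith
    field_simp
  refine key_ppt_core D _ _ _ _ hD
    (by nlinarith [mul_nonneg (by linarith : (0:ℝ) ≤ γ) hp0])
    (by nlinarith [mul_nonneg (by linarith : (0:ℝ) ≤ γ - 1) (by linarith : (0:ℝ) ≤ 1 - p)])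
    (by nlinarith) (by positivity) ((div_le_one hDp).2 hx1)
    (by positivity) ((div_le_one hDm).2 hy1) ?_ ?_
  · rw [hid]; positivity
  · rw [hid, div_le_iff₀ hD0]; linarith

/-! ### Upper bounds on the objective -/

lemma obj_le_one (hd : 2 ≤ d) {γ p q : ℝ} (hγ : 1 ≤ γ)
    (hp : p ∈ Set.Icc (0:ℝ) 1) (hq : q ∈ Set.Icc (0:ℝ) 1)
    {M : BMat d} (hM : M.PosSemidef) (hM1 : ((1 : BMat d) - M).PosSemidef) :
    ((M * (werner d q - (γ : ℂ) • werner d p)).trace).re ≤ 1 := by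
  rw [werner_sub hd, obj_eq]
  have hD : (2:ℝ) ≤ (d:ℝ) := by exact_mod_cast hd
  have hx0 := trace_mul_psd_re_nonneg hM Sm_psd
  have hy0 := trace_mul_psd_re_nonneg hM Am_psd
  have hx1 : ((M * Sm d).trace).re ≤ (d:ℝ)^2 + (d:ℝ) := by
    have h := trace_mul_psd_re_nonneg hM1 Sm_psd
    rw [sub_mul, one_mul, trace_sub, Complex.sub_re, trace_Sm, Complex.ofReal_re] at h
    linarith
  have hy1 : ((M * Am d).trace).re ≤ (d:ℝ)^2 - (d:ℝ) := by
    have h := trace_mul_psd_re_nonneg hM1 Am_psd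
    rw [sub_mul, one_mul, trace_sub, Complex.sub_re, trace_Am, Complex.ofReal_re] at h
    linarith
  exact wrap_all (d:ℝ) γ p q _ _ hD hγ hp.1 hp.2 hq.1 hq.2 hx0 hx1 hy0 hy1

lemma obj_le_ppt (hd : 2 ≤ d) {γ p q : ℝ} (hγ : 1 ≤ γ)
    (hp : p ∈ Set.Icc (0:ℝ) 1) (hq : q ∈ Set.Icc (0:ℝ) 1)
    {M : BMat d} (hM : M.PosSemidef) (hM1 : ((1 : BMat d) - M).PosSemidef)
    (hpt : (ptB M).PosSemidef) (hpt1 : ((1 : BMat d) - ptB M).PosSemidef) :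
    ((M * (werner d q - (γ : ℂ) • werner d p)).trace).re ≤ 2/((d:ℝ)+1) := by
  rw [werner_sub hd, obj_eq]
  have hD : (2:ℝ) ≤ (d:ℝ) := by exact_mod_cast hd
  have hx0 := trace_mul_psd_re_nonneg hM Sm_psd
  have hy0 := trace_mul_psd_re_nonneg hM Am_psd
  have hx1 : ((M * Sm d).trace).re ≤ (d:ℝ)^2 + (d:ℝ) := by
    have h := trace_mul_psd_re_nonneg hM1 Sm_psd
    rw [sub_mul, one_mul, trace_sub, Complex.sub_re, trace_Sm, Complex.ofReal_re] at h
    linarith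
  have hy1 : ((M * Am d).trace).re ≤ (d:ℝ)^2 - (d:ℝ) := by
    have h := trace_mul_psd_re_nonneg hM1 Am_psd
    rw [sub_mul, one_mul, trace_sub, Complex.sub_re, trace_Am, Complex.ofReal_re] at h
    linarith
  -- PT constraints
  have hf0 : 0 ≤ ((M * swapOp d).trace).re := by
    have h := hpt.dotProduct_mulVec_nonneg (wv d)
    rw [quad_G] at h
    exact (Complex.le_def.mp h).1
  have hf1 : ((M * swapOp d).trace).re ≤ (d:ℝ) := by
    have h := hpt1.dotProduct_mulVec_nonneg (wv d)
    rw [Matrix.sub_mulVec, dotProduct_sub, one_mulVec, norm_wv, quad_G] at h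
    have h2 := (Complex.le_def.mp h).1
    simp only [Complex.zero_re, Complex.sub_re, Complex.natCast_re] at h2
    linarith
  have hxy : ((M * Sm d).trace).re - ((M * Am d).trace).re
      = 2 * ((M * swapOp d).trace).re := by
    have e : M * Sm d - M * Am d = (2:ℂ) • (M * swapOp d) := by
      rw [← mul_sub, Sm_sub_Am, mul_smul_comm]
    have e2 : (M * Sm d).trace - (M * Am d).trace = (2:ℂ) * (M * swapOp d).trace := by
      rw [← trace_sub, e, trace_smul, smul_eq_mul]
    have e3 := congrArg Complex.re e2
    rw [Complex.sub_re, show ((2:ℂ)) = ((2:ℝ):ℂ) by norm_num, Complex.re_ofReal_mul] at e3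
    exact e3
  exact wrap_ppt (d:ℝ) γ p q _ _ hD hγ hp.1 hp.2 hq.1 hq.2 hx0 hx1 hy0 hy1
    (by rw [hxy]; linarith) (by rw [hxy]; linarith)

/-! ### Witnesses -/

lemma cast_ne_facts (hd : 2 ≤ d) :
    ((d:ℂ)) ≠ 0 ∧ ((d:ℂ)) + 1 ≠ 0 ∧ ((d:ℂ)) - 1 ≠ 0 := by
  have hD : (2:ℝ) ≤ (d:ℝ) := by exact_mod_cast hd
  refine ⟨?_, ?_, ?_⟩
  · exact_mod_cast (by omega : d ≠ 0)
  · intro h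
    have : ((d:ℝ)) = -1 := by exact_mod_cast (by linear_combination h : ((d:ℂ)) = -1)
    linarith
  · intro h
    have : ((d:ℝ)) = 1 := by exact_mod_cast (by linear_combination h : ((d:ℂ)) = 1)
    linarith

lemma M1_compl : (1 : BMat d) - ((1/2 : ℝ) : ℂ) • Sm d = ((1/2 : ℝ) : ℂ) • Am d := by
  unfold Sm Am
  match_scalars <;> push_cast <;> ring

lemma M1_value (hd : 2 ≤ d) (γ : ℝ) :
    (((((1/2 : ℝ) : ℂ) • Sm d) * (werner d 1 - (γ : ℂ) • werner d 0)).trace).re = 1 := by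
  rw [werner_sub hd γ 0 1, obj_smulSm]
  have hD : (2:ℝ) ≤ (d:ℝ) := by exact_mod_cast hd
  have h0 : ((d:ℝ)) ≠ 0 := by linarith
  have h1 : ((d:ℝ)) + 1 ≠ 0 := by linarith
  field_simp
  ring

lemma M2_compl (hd : 2 ≤ d) :
    (1 : BMat d) - ((1/((d:ℝ)+1) : ℝ) : ℂ) • Sm d
      = ((((d:ℝ)-1)/((d:ℝ)+1) : ℝ) : ℂ) • 1 + ((1/((d:ℝ)+1) : ℝ) : ℂ) • Am d := by
  obtain ⟨h0, h1, h2⟩ := cast_ne_facts hd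
  unfold Sm Am
  match_scalars <;> push_cast <;> field_simp <;> ring

lemma ptB_Sm : ptB (Sm d) = 1 + Gm d := by
  unfold Sm; rw [ptB_add, ptB_one, ptB_swap]

lemma M2_ptB : ptB (((1/((d:ℝ)+1) : ℝ) : ℂ) • Sm d)
    = ((1/((d:ℝ)+1) : ℝ) : ℂ) • (1 + Gm d) := by
  rw [ptB_smul, ptB_Sm]

lemma M2_ptB_compl (hd : 2 ≤ d) :
    (1 : BMat d) - ((1/((d:ℝ)+1) : ℝ) : ℂ) • (1 + Gm d)
      = ((1/((d:ℝ)+1) : ℝ) : ℂ) • ((d : ℂ) • 1 - Gm d) := by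
  obtain ⟨h0, h1, h2⟩ := cast_ne_facts hd
  match_scalars <;> push_cast <;> field_simp <;> ring

lemma M2_value (hd : 2 ≤ d) (γ : ℝ) :
    (((((1/((d:ℝ)+1) : ℝ) : ℂ) • Sm d) * (werner d 1 - (γ : ℂ) • werner d 0)).trace).re
      = 2/((d:ℝ)+1) := by
  rw [werner_sub hd γ 0 1, obj_smulSm]
  have hD : (2:ℝ) ≤ (d:ℝ) := by exact_mod_cast hd
  have h0 : ((d:ℝ)) ≠ 0 := by linarith
  have h1 : ((d:ℝ)) + 1 ≠ 0 := by linarith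
  field_simp
  ring

end WernerAux

lemma WernerAux.ptB_zero {d : ℕ} : ptB (0 : BMat d) = 0 := rfl

open WernerAux in
/-- QLDP for Werner states: over all measurements the optimal δ is 1 (no privacy),
while over PPT measurements the optimal δ is 2/(d+1). -/
theorem stmt_10 (d : ℕ) (hd : 2 ≤ d) (γ : ℝ) (hγ : 1 ≤ γ) :
    (sSup {x : ℝ | ∃ p ∈ Set.Icc (0 : ℝ) 1, ∃ q ∈ Set.Icc (0 : ℝ) 1,
        x = Eg γ (werner d q) (werner d p)} = 1) ∧
    (sSup {x : ℝ | ∃ p ∈ Set.Icc (0 : ℝ) 1, ∃ q ∈ Set.Icc (0 : ℝ) 1,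
        x = EgPPT γ (werner d q) (werner d p)} = 2 / (d + 1)) := by
  have hd0 : 0 < d := by omega
  have hD : (2:ℝ) ≤ (d:ℝ) := by exact_mod_cast hd
  have h01 : (0:ℝ) ∈ Set.Icc (0:ℝ) 1 := by norm_num
  have h11 : (1:ℝ) ∈ Set.Icc (0:ℝ) 1 := by norm_num
  have hc : (0:ℝ) ≤ 1/((d:ℝ)+1) := by positivity
  constructor
  · have hEg_le : ∀ p ∈ Set.Icc (0:ℝ) 1, ∀ q ∈ Set.Icc (0:ℝ) 1,
        Eg γ (werner d q) (werner d p) ≤ 1 := by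
      intro p hp q hq
      apply csSup_le
      · exact ⟨0, 0, Matrix.PosSemidef.zero,
          by rw [sub_zero]; exact Matrix.PosSemidef.one, by simp⟩
      · rintro x ⟨M, hM, hM1, rfl⟩
        exact obj_le_one hd hγ hp hq hM hM1
    have hval : Eg γ (werner d 1) (werner d 0) = 1 := by
      apply le_antisymm (hEg_le 0 h01 1 h11)
      apply le_csSup
      · exact ⟨1, by rintro x ⟨M, hM, hM1, rfl⟩; exact obj_le_one hd hγ h01 h11 hM hM1⟩
      · exact ⟨((1/2:ℝ):ℂ) • Sm d, smul_psd (by norm_num) Sm_psd,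
          by rw [M1_compl]; exact smul_psd (by norm_num) Am_psd, (M1_value hd γ).symm⟩
    apply le_antisymm
    · apply csSup_le
      · exact ⟨Eg γ (werner d 0) (werner d 0), 0, h01, 0, h01, rfl⟩
      · rintro x ⟨p, hp, q, hq, rfl⟩
        exact hEg_le p hp q hq
    · apply le_csSup
      · refine ⟨1, ?_⟩
        rintro x ⟨p, hp, q, hq, rfl⟩
        exact hEg_le p hp q hq
      · exact ⟨0, h01, 1, h11, hval.symm⟩
  · have hEg_le : ∀ p ∈ Set.Icc (0:ℝ) 1, ∀ q ∈ Set.Icc (0:ℝ) 1,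
        EgPPT γ (werner d q) (werner d p) ≤ 2/((d:ℝ)+1) := by
      intro p hp q hq
      apply csSup_le
      · refine ⟨0, 0, Matrix.PosSemidef.zero,
          by rw [sub_zero]; exact Matrix.PosSemidef.one, ?_, ?_, by simp⟩
        · rw [ptB_zero]; exact Matrix.PosSemidef.zero
        · rw [ptB_zero, sub_zero]; exact Matrix.PosSemidef.one
      · rintro x ⟨M, hM, hM1, hpt, hpt1, rfl⟩
        exact obj_le_ppt hd hγ hp hq hM hM1 hpt hpt1
    have hval : EgPPT γ (werner d 1) (werner d 0) = 2/((d:ℝ)+1) := by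
      apply le_antisymm (hEg_le 0 h01 1 h11)
      apply le_csSup
      · exact ⟨2/((d:ℝ)+1), by
          rintro x ⟨M, hM, hM1, hpt, hpt1, rfl⟩
          exact obj_le_ppt hd hγ h01 h11 hM hM1 hpt hpt1⟩
      · refine ⟨((1/((d:ℝ)+1):ℝ):ℂ) • Sm d, smul_psd hc Sm_psd, ?_, ?_, ?_,
          (M2_value hd γ).symm⟩
        · rw [M2_compl hd]
          exact Matrix.PosSemidef.add
            (smul_psd (div_nonneg (by linarith) (by linarith)) Matrix.PosSemidef.one)
            (smul_psd hc Am_psd)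
        · rw [M2_ptB]
          exact smul_psd hc (Matrix.PosSemidef.add Matrix.PosSemidef.one (Gm_psd hd0))
        · rw [M2_ptB, M2_ptB_compl hd]
          exact smul_psd hc (dGm_psd hd0)
    apply le_antisymm
    · apply csSup_le
      · exact ⟨EgPPT γ (werner d 0) (werner d 0), 0, h01, 0, h01, rfl⟩
      · rintro x ⟨p, hp, q, hq, rfl⟩
        exact hEg_le p hp q hq
    · apply le_csSup
      · refine ⟨2/((d:ℝ)+1), ?_⟩
        rintro x ⟨p, hp, q, hq, rfl⟩
        exact hEg_le p hp q hq
      · exact ⟨0, h01, 1, h11, hval.symm⟩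
end
end

section
/- Let d ≥ 2, p, q ∈ [0,1], and γ ≥ 1. Define the normalized Choi state of the depolarizing channel with parameter p on ℂ^d ⊗ ℂ^d by ρ_p := (1−p)·Φ + (p/d²)·I, where Φ is the maximally entangled state. Then the hockey-stick divergence satisfies E_γ(ρ_q‖ρ_p) = max{0, (1−q) − γ(1−p) + (q − γp)/d², (q − γp) − (q − γp)/d²} (equivalently, this is the hockey-stick channel divergence between the depolarizing channels with parameters q and p under all measurements). -/
noncomputable section
open Matrix ComplexOrder

/-- The maximally entangled state `Φ = (1/d) Σ_{i,j} |i⟩⟨j| ⊗ |i⟩⟨j|`. -/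
def maxEnt (d : ℕ) : BMat d :=
  fun p q => if p.1 = p.2 ∧ q.1 = q.2 then ((d : ℂ))⁻¹ else 0

/-- The normalized Choi state of the depolarizing channel with parameter `p`:
`ρ_p = (1−p)Φ + (p/d²)I`. -/
def depolChoi (d : ℕ) (p : ℝ) : BMat d :=
  ((1 - p : ℝ) : ℂ) • maxEnt d + ((p / (d : ℝ) ^ 2 : ℝ) : ℂ) • (1 : BMat d)

lemma maxEnt_herm (d : ℕ) : (maxEnt d).IsHermitian := by
  ext p q
  simp [maxEnt, conjTranspose_apply, and_comm]
  split_ifs <;> simp [Complex.conj_inv]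

lemma sum_diag (d : ℕ) (c : ℂ) :
    ∑ r : Fin d × Fin d, (if r.1 = r.2 then c else 0) = d * c := by
  rw [Fintype.sum_prod_type]
  simp [Finset.sum_ite_eq]

lemma maxEnt_mul_maxEnt (d : ℕ) (hd : d ≠ 0) : maxEnt d * maxEnt d = maxEnt d := by
  ext p q
  simp only [mul_apply, maxEnt]
  have : ∀ r : Fin d × Fin d,
      (if p.1 = p.2 ∧ r.1 = r.2 then ((d:ℂ))⁻¹ else 0) *
      (if r.1 = r.2 ∧ q.1 = q.2 then ((d:ℂ))⁻¹ else 0) =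
      (if r.1 = r.2 then (if p.1 = p.2 ∧ q.1 = q.2 then ((d:ℂ))⁻¹ * (d:ℂ)⁻¹ else 0) else 0) := by
    intro r; split_ifs <;> simp_all
  rw [Finset.sum_congr rfl (fun r _ => this r), sum_diag]
  have hd' : (d:ℂ) ≠ 0 := Nat.cast_ne_zero.mpr hd
  split_ifs <;> field_simp <;> simp

lemma maxEnt_posSemidef (d : ℕ) (hd : d ≠ 0) : (maxEnt d).PosSemidef := by
  have h : maxEnt d = (maxEnt d)ᴴ * maxEnt d := by
    rw [(maxEnt_herm d).eq, maxEnt_mul_maxEnt d hd]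
  rw [h]; exact posSemidef_conjTranspose_mul_self _

lemma one_sub_maxEnt_posSemidef (d : ℕ) (hd : d ≠ 0) :
    ((1 : BMat d) - maxEnt d).PosSemidef := by
  have h : (1 : BMat d) - maxEnt d = ((1 : BMat d) - maxEnt d)ᴴ * ((1 : BMat d) - maxEnt d) := by
    rw [conjTranspose_sub, conjTranspose_one, (maxEnt_herm d).eq]
    rw [sub_mul, one_mul, mul_sub, mul_one, maxEnt_mul_maxEnt d hd, sub_self, sub_zero]
  rw [h]; exact posSemidef_conjTranspose_mul_self _

lemma maxEnt_trace (d : ℕ) (hd : d ≠ 0) : (maxEnt d).trace = 1 := by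
  have hd' : (d:ℂ) ≠ 0 := Nat.cast_ne_zero.mpr hd
  rw [trace]
  simp only [diag, maxEnt, and_self]
  rw [sum_diag]
  field_simp

lemma one_trace (d : ℕ) : (1 : BMat d).trace = ((d:ℂ))^2 := by
  rw [trace_one]
  simp [sq]

lemma psd_trace_nonneg_s17 {d : ℕ} {M : BMat d} (h : M.PosSemidef) : 0 ≤ M.trace := by
  rw [trace]
  apply Finset.sum_nonneg
  intro i _
  exact h.diag_nonneg

lemma psd_trace_mul_nonneg_s17 {d : ℕ} {M N : BMat d} (hM : M.PosSemidef) (hN : N.PosSemidef) :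
    0 ≤ (M * N).trace := by
  open scoped MatrixOrder Matrix.Norms.L2Operator in
  obtain ⟨B, rfl⟩ := CStarAlgebra.nonneg_iff_eq_star_mul_self.mp hN.nonneg
  rw [← mul_assoc, trace_mul_comm]
  rw [← mul_assoc]
  exact psd_trace_nonneg_s17 (hM.mul_mul_conjTranspose_same B)

lemma psd_trace_mul_re_nonneg {d : ℕ} {M N : BMat d} (hM : M.PosSemidef) (hN : N.PosSemidef) :
    0 ≤ ((M * N).trace).re :=
  (Complex.le_def.mp (psd_trace_mul_nonneg_s17 hM hN)).1

/-- Hockey-stick divergence between Choi states of depolarizing channels. -/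
theorem stmt_17 (d : ℕ) (hd : 2 ≤ d) (p q : ℝ)
    (hp : p ∈ Set.Icc (0 : ℝ) 1) (hq : q ∈ Set.Icc (0 : ℝ) 1)
    (γ : ℝ) (hγ : 1 ≤ γ) :
    Eg γ (depolChoi d q) (depolChoi d p) =
      max 0 (max ((1 - q) - γ * (1 - p) + (q - γ * p) / d ^ 2)
        ((q - γ * p) - (q - γ * p) / d ^ 2)) := by
  obtain ⟨hp0, hp1⟩ := hp
  obtain ⟨hq0, hq1⟩ := hq
  have hd0 : d ≠ 0 := by omega
  have hd2 : (2:ℝ) ≤ (d:ℝ) := by exact_mod_cast hd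
  have hdR : (0:ℝ) < (d:ℝ)^2 := by positivity
  have hd1 : (1:ℝ) < (d:ℝ)^2 := by nlinarith
  set a : ℝ := (1 - q) - γ * (1 - p) with ha
  set b : ℝ := q / (d:ℝ)^2 - γ * (p / (d:ℝ)^2) with hb
  have hb' : b * (d:ℝ)^2 = q - γ * p := by rw [hb]; field_simp
  -- decomposition of the difference operator
  have hA : depolChoi d q - (γ:ℂ) • depolChoi d p
      = ((a + b : ℝ):ℂ) • maxEnt d + ((b : ℝ):ℂ) • ((1 : BMat d) - maxEnt d) := by
    unfold depolChoi
    rw [ha, hb]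
    push_cast
    module
  -- trace formula
  have key : ∀ M : BMat d, ((M * (depolChoi d q - (γ:ℂ) • depolChoi d p)).trace).re
      = (a + b) * ((M * maxEnt d).trace).re
        + b * ((M * ((1 : BMat d) - maxEnt d)).trace).re := by
    intro M
    rw [hA, mul_add, Matrix.mul_smul, Matrix.mul_smul, trace_add, trace_smul, trace_smul]
    simp [smul_eq_mul, Complex.add_re, Complex.re_ofReal_mul]
  -- identify RHS constants
  have hC1 : (1 - q) - γ * (1 - p) + (q - γ * p) / (d:ℝ) ^ 2 = a + b := by
    rw [ha, hb]; field_simp; try ring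
  have hC2 : (q - γ * p) - (q - γ * p) / (d:ℝ) ^ 2 = b * ((d:ℝ)^2 - 1) := by
    rw [hb]; field_simp
  rw [hC1, hC2]
  -- facts about Φ
  have hΦpsd := maxEnt_posSemidef d hd0
  have hΦ'psd := one_sub_maxEnt_posSemidef d hd0
  have htrΦ : (maxEnt d * maxEnt d).trace = 1 := by
    rw [maxEnt_mul_maxEnt d hd0, maxEnt_trace d hd0]
  have hΦΦ' : (maxEnt d * ((1 : BMat d) - maxEnt d)).trace = 0 := by
    rw [mul_sub, mul_one, maxEnt_mul_maxEnt d hd0, sub_self, trace_zero]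
  have hΦ'Φ : (((1 : BMat d) - maxEnt d) * maxEnt d).trace = 0 := by
    rw [sub_mul, one_mul, maxEnt_mul_maxEnt d hd0, sub_self, trace_zero]
  have hΦ'sq : ((1 : BMat d) - maxEnt d) * ((1 : BMat d) - maxEnt d)
      = (1 : BMat d) - maxEnt d := by
    rw [sub_mul, one_mul, mul_sub, mul_one, maxEnt_mul_maxEnt d hd0, sub_self, sub_zero]
  have hΦ'tr : (((1 : BMat d) - maxEnt d)).trace.re = (d:ℝ)^2 - 1 := by
    rw [trace_sub, one_trace, maxEnt_trace d hd0, Complex.sub_re, Complex.one_re]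
    have h : ((d:ℂ))^2 = ((((d:ℝ))^2 : ℝ) : ℂ) := by push_cast; ring
    rw [h, Complex.ofReal_re]
  -- key sign fact: if b > 0 then a + b ≤ 0
  have hsign : 0 < b → a + b ≤ 0 := by
    intro hb0
    have hqp : 0 < q - γ * p := by nlinarith [mul_pos hb0 hdR]
    nlinarith [mul_pos hqp (show (0:ℝ) < (d:ℝ)^2 - 1 by linarith),
      mul_nonneg (sub_nonneg.mpr hγ) hdR.le]
  unfold Eg
  set S : Set ℝ := {x : ℝ | ∃ M : BMat d, M.PosSemidef ∧ ((1 : BMat d) - M).PosSemidef ∧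
    x = ((M * (depolChoi d q - (γ:ℂ) • depolChoi d p)).trace).re} with hS
  set V : ℝ := max 0 (max (a + b) (b * ((d:ℝ)^2 - 1))) with hV
  -- upper bound
  have hub : ∀ x ∈ S, x ≤ V := by
    rintro x ⟨M, hM, hM', rfl⟩
    rw [key M]
    have h10 : 0 ≤ ((M * maxEnt d).trace).re := psd_trace_mul_re_nonneg hM hΦpsd
    have h20 : 0 ≤ ((M * ((1 : BMat d) - maxEnt d)).trace).re :=
      psd_trace_mul_re_nonneg hM hΦ'psd
    have h11 : ((M * maxEnt d).trace).re ≤ 1 := by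
      have h := psd_trace_mul_re_nonneg hM' hΦpsd
      rw [sub_mul, one_mul, trace_sub, Complex.sub_re, maxEnt_trace d hd0] at h
      simp only [Complex.one_re] at h
      linarith
    have h21 : ((M * ((1 : BMat d) - maxEnt d)).trace).re ≤ (d:ℝ)^2 - 1 := by
      have h := psd_trace_mul_re_nonneg hM' hΦ'psd
      rw [sub_mul, one_mul, trace_sub, Complex.sub_re, hΦ'tr] at h
      linarith
    rcases le_or_gt b 0 with hb0 | hb0
    · rcases le_or_gt (a + b) 0 with hab | hab
      · have hx : (a+b) * ((M * maxEnt d).trace).re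
            + b * ((M * ((1 : BMat d) - maxEnt d)).trace).re ≤ 0 := by
          have := mul_nonpos_of_nonpos_of_nonneg hab h10
          have := mul_nonpos_of_nonpos_of_nonneg hb0 h20
          linarith
        exact le_trans hx (le_max_left _ _)
      · have hx : (a+b) * ((M * maxEnt d).trace).re
            + b * ((M * ((1 : BMat d) - maxEnt d)).trace).re ≤ a + b := by
          have h1 := mul_le_mul_of_nonneg_left h11 hab.le
          have h2 := mul_nonpos_of_nonpos_of_nonneg hb0 h20
          nlinarith
        exact le_trans hx (le_trans (le_max_left _ _) (le_max_right _ _))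
    · have hab := hsign hb0
      have hx : (a+b) * ((M * maxEnt d).trace).re
          + b * ((M * ((1 : BMat d) - maxEnt d)).trace).re ≤ b * ((d:ℝ)^2 - 1) := by
        have h1 := mul_nonpos_of_nonpos_of_nonneg hab h10
        have h2 := mul_le_mul_of_nonneg_left h21 hb0.le
        linarith
      exact le_trans hx (le_trans (le_max_right _ _) (le_max_right _ _))
  -- the value is attained
  have hmem : V ∈ S := by
    rcases le_or_gt b 0 with hb0 | hb0
    · rcases le_or_gt (a + b) 0 with hab | hab
      · have hV0 : V = 0 := by
          rw [hV]
          have h2 : b * ((d:ℝ)^2 - 1) ≤ 0 := mul_nonpos_of_nonpos_of_nonneg hb0 (by linarith)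
          rw [max_eq_left (max_le hab h2)]
        rw [hV0]
        exact ⟨0, PosSemidef.zero, by rw [sub_zero]; exact PosSemidef.one,
          by rw [zero_mul, trace_zero]; simp⟩
      · have hV1 : V = a + b := by
          rw [hV]
          have h2 : b * ((d:ℝ)^2 - 1) ≤ a + b :=
            le_trans (mul_nonpos_of_nonpos_of_nonneg hb0 (by linarith)) hab.le
          rw [max_eq_left h2, max_eq_right hab.le]
        rw [hV1]
        refine ⟨maxEnt d, hΦpsd, hΦ'psd, ?_⟩
        rw [key (maxEnt d), htrΦ, hΦΦ']
        simp
    · have hab := hsign hb0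
      have hC2pos : 0 ≤ b * ((d:ℝ)^2 - 1) := mul_nonneg hb0.le (by linarith)
      have hV2 : V = b * ((d:ℝ)^2 - 1) := by
        have h1 : max (a+b) (b*((d:ℝ)^2-1)) = b*((d:ℝ)^2-1) :=
          max_eq_right (le_trans hab hC2pos)
        rw [hV, h1, max_eq_right hC2pos]
      rw [hV2]
      refine ⟨(1 : BMat d) - maxEnt d, hΦ'psd, by rw [sub_sub_cancel]; exact hΦpsd, ?_⟩
      rw [key ((1 : BMat d) - maxEnt d), hΦ'Φ, hΦ'sq, hΦ'tr]
      simp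
  exact le_antisymm (csSup_le ⟨V, hmem⟩ hub) (le_csSup ⟨V, hub⟩ hmem)
end
end

section
/- Let d ≥ 2 and let M be a matrix on ℂ^d ⊗ ℂ^d satisfying 0 ≤ M ≤ I and 0 ≤ T_B(M) ≤ I (a PPT measurement operator). Let Π_sym := (I + F)/2 and Π_asym := (I − F)/2 be the projections onto the symmetric and antisymmetric subspaces, where F is the swap operator. Then Tr[M Π_asym] ≤ Tr[M Π_sym] ≤ Tr[M Π_asym] + d. -/
noncomputable section
open Matrix ComplexOrder

/-- The projection onto the symmetric subspace, `Π_sym = (I + F)/2`. -/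
def projSym (d : ℕ) : BMat d := (2 : ℂ)⁻¹ • (1 + swapOp d)

/-- The projection onto the antisymmetric subspace, `Π_asym = (I − F)/2`. -/
def projAsym (d : ℕ) : BMat d := (2 : ℂ)⁻¹ • (1 - swapOp d)

def gam (d : ℕ) : (Fin d × Fin d) → ℂ := fun p => if p.1 = p.2 then 1 else 0

lemma quad (d : ℕ) (N : BMat d) :
    dotProduct (star (gam d)) (N.mulVec (gam d)) = ∑ i, ∑ j, N (i,i) (j,j) := by
  simp [dotProduct, mulVec, gam, Fintype.sum_prod_type, Finset.mul_sum,
    ite_mul, mul_ite, apply_ite]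

lemma traceF (d : ℕ) (M : BMat d) :
    (M * swapOp d).trace = ∑ i, ∑ j, M (i,j) (j,i) := by
  have h : ∀ (a b : Fin d) (q : Fin d × Fin d), (q.1 = b ∧ q.2 = a) ↔ q = (b, a) := by
    intro a b q; rw [Prod.ext_iff]
  simp only [Matrix.trace, Matrix.mul_apply, Matrix.diag, swapOp]
  rw [Fintype.sum_prod_type]
  congr 1; ext i; congr 1; ext j
  rw [Finset.sum_congr rfl (fun q _ => by rw [if_congr (h i j q) rfl rfl])]
  simp

/-- For any PPT measurement operator `M`,
`Tr[M Π_asym] ≤ Tr[M Π_sym] ≤ Tr[M Π_asym] + d`. -/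
theorem stmt_18 (d : ℕ) (hd : 2 ≤ d) (M : BMat d)
    (hM : M.PosSemidef) (hM1 : ((1 : BMat d) - M).PosSemidef)
    (hMT : (ptB M).PosSemidef) (hMT1 : ((1 : BMat d) - ptB M).PosSemidef) :
    ((M * projAsym d).trace).re ≤ ((M * projSym d).trace).re ∧
    ((M * projSym d).trace).re ≤ ((M * projAsym d).trace).re + d := by
  set t := (M * swapOp d).trace with ht
  have hsplit : (M * projSym d).trace = (M * projAsym d).trace + t := by
    have : projSym d = projAsym d + swapOp d := by
      unfold projSym projAsym
      ext p q
      simp [Matrix.add_apply, Matrix.smul_apply, Matrix.sub_apply]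
      ring
    rw [this, mul_add, Matrix.trace_add]
  have hform : t = dotProduct (star (gam d)) ((ptB M).mulVec (gam d)) := by
    rw [quad, ht, traceF]
    rfl
  have h0 : (0 : ℂ) ≤ t := hform ▸ hMT.dotProduct_mulVec_nonneg (gam d)
  have hId : dotProduct (star (gam d)) ((1 : BMat d).mulVec (gam d)) = d := by
    rw [quad]
    simp [Matrix.one_apply, Prod.ext_iff]
  have hup : (0 : ℂ) ≤ (d : ℂ) - t := by
    have := hMT1.dotProduct_mulVec_nonneg (gam d)
    rwa [sub_mulVec, dotProduct_sub, hId, ← hform] at this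
  have h0re : 0 ≤ t.re := by
    rw [Complex.le_def] at h0; exact h0.1
  have hupre : t.re ≤ d := by
    rw [Complex.le_def] at hup
    have := hup.1
    simp at this
    linarith
  constructor
  · rw [hsplit, Complex.add_re]; linarith
  · rw [hsplit, Complex.add_re]; linarith
end
end
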